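/- Fix J > 0 and h > 0. Let f : ℕ → (0,∞) satisfy f(n) → ∞ and f(n) ≤ n, and set p = f(n)/n. Then the energy barrier Γ*_n of the Erdős–Rényi random graph ER_n(p) satisfies Γ*_n / ((1/4)·J·n·f(n)) → 1 in probability as n → ∞; that is, for every ε > 0, P[ |Γ*_n / ((1/4)·J·n·f(n)) − 1| > ε ] → 0. -/

import Mathlib

/-- Spin value of a Boolean: `+1` for `true`, `−1` for `false`. -/
def spin (b : Bool) : ℝ := if b then 1 else -1

/-- The product of the spins at the two endpoints of an unoriented edge. -/
noncomputable def edgeEnergy {V : Type*} (σ : V → Bool) : Sym2 V → ℝ :=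
  Sym2.lift ⟨fun v w => spin (σ v) * spin (σ w), fun v w => by ring⟩

/-- The Hamiltonian `H(σ) = −(J/2)·Σ_{(v,w)∈E} σ(v)σ(w) − (h/2)·Σ_v σ(v)` of a
multigraph with edge multiset `E` (edges counted with multiplicity). -/
noncomputable def hamiltonian {V : Type*} [Fintype V] (J h : ℝ)
    (E : Multiset (Sym2 V)) (σ : V → Bool) : ℝ :=
  -(J/2) * (E.map (edgeEnergy σ)).sum - (h/2) * ∑ v, spin (σ v)

/-- Two spin configurations differ at exactly one vertex. -/
def IsFlipStep {V : Type*} [DecidableEq V] (σ τ : V → Bool) : Prop :=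
  ∃ v, τ = Function.update σ v (! σ v)

/-- The communication height `Φ(ξ,ζ)`: the minimum over paths `γ : ξ → ζ` of
single spin-flips of the maximal energy along the path. -/
noncomputable def commHeight {V : Type*} [Fintype V] [DecidableEq V]
    (H : (V → Bool) → ℝ) (ξ ζ : V → Bool) : ℝ :=
  sInf { M : ℝ | ∃ (k : ℕ) (γ : Fin (k+1) → (V → Bool)),
    γ 0 = ξ ∧ γ (Fin.last k) = ζ ∧
    (∀ i : Fin k, IsFlipStep (γ i.castSucc) (γ i.succ)) ∧
    M = Finset.univ.sup' ⟨0, Finset.mem_univ 0⟩ (fun i => H (γ i)) }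

/-- The energy barrier `Γ* = Φ(⊟,⊞) − H(⊟)` of an energy landscape `H` on spin
configurations. -/
noncomputable def gammaStar {V : Type*} [Fintype V] [DecidableEq V]
    (H : (V → Bool) → ℝ) : ℝ :=
  commHeight H (fun _ => false) (fun _ => true) - H (fun _ => false)


/-- The possible edges of a simple graph on `Fin n`: non-diagonal unordered
pairs. An Erdős–Rényi sample is a function `ω` deciding which edges are present. -/
abbrev EdgeCand (n : ℕ) := {e : Sym2 (Fin n) // ¬ e.IsDiag}

/-- The probability, under `ER_n(p)` (each possible edge present independently
with probability `p`), of a set `A` of graphs on `Fin n`. -/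
noncomputable def erProb (n : ℕ) (p : ℝ) (A : Finset (EdgeCand n → Bool)) : ℝ :=
  ∑ ω ∈ A,
    p ^ (Finset.univ.filter (fun e : EdgeCand n => ω e = true)).card *
      (1 - p) ^ (Finset.univ.filter (fun e : EdgeCand n => ω e = false)).card


/-- The edge multiset of the graph sampled as `ω`: the present edges. -/
def erEdges (n : ℕ) (ω : EdgeCand n → Bool) : Multiset (Sym2 (Fin n)) :=
  (Finset.univ.filter (fun e : EdgeCand n => ω e = true)).val.map Subtype.val

open Finset

variable {n : ℕ}

noncomputable def xorE (σ : Fin n → Bool) : Sym2 (Fin n) → Bool :=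
  Sym2.lift ⟨fun v w => xor (σ v) (σ w), fun v w => Bool.xor_comm _ _⟩

lemma edgeEnergy_eq (σ : Fin n → Bool) (e : Sym2 (Fin n)) :
    edgeEnergy σ e = if xorE σ e then (-1 : ℝ) else 1 := by
  induction e using Sym2.ind with
  | _ v w => cases hv : σ v <;> cases hw : σ w <;>
      simp [edgeEnergy, xorE, spin, hv, hw]

noncomputable def cutC (σ : Fin n → Bool) : Finset (EdgeCand n) :=
  Finset.univ.filter (fun e => xorE σ e.1 = true)

noncomputable def Xc (T : Finset (EdgeCand n)) (ω : EdgeCand n → Bool) : ℕ :=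
  (T.filter (fun e => ω e = true)).card

def nT (σ : Fin n → Bool) : ℕ := (Finset.univ.filter (fun v => σ v = true)).card

lemma nT_le (σ : Fin n → Bool) : nT σ ≤ n := by
  simpa [nT] using Finset.card_filter_le Finset.univ (fun v => σ v = true)

lemma sum_spin (σ : Fin n → Bool) : ∑ v, spin (σ v) = 2 * (nT σ : ℝ) - n := by
  have h1 : ∑ v, spin (σ v)
      = ∑ v ∈ univ.filter (fun v => σ v = true), (1:ℝ)
        + ∑ v ∈ univ.filter (fun v => ¬ (σ v = true)), (-1:ℝ) := by
    rw [← Finset.sum_ite]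
    refine Finset.sum_congr rfl fun v _ => ?_
    cases hv : σ v <;> simp [spin, hv]
  have h2 : (univ.filter (fun v => ¬ (σ v = true))).card = n - nT σ := by
    have h3 := Finset.card_filter_add_card_filter_not
      (s := (univ : Finset (Fin n))) (p := fun v => σ v = true)
    simp only [Finset.card_univ, Fintype.card_fin] at h3
    unfold nT
    omega
  rw [h1]
  simp only [Finset.sum_const, nsmul_eq_mul, mul_one, mul_neg_one, h2]
  rw [Nat.cast_sub (nT_le σ)]
  unfold nT
  ring

lemma erEdges_sum (ω : EdgeCand n → Bool) (σ : Fin n → Bool) :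
    ((erEdges n ω).map (edgeEnergy σ)).sum
      = (Xc univ ω : ℝ) - 2 * (Xc (cutC σ) ω : ℝ) := by
  have h0 : ((erEdges n ω).map (edgeEnergy σ)).sum
      = ∑ e ∈ univ.filter (fun e : EdgeCand n => ω e = true), edgeEnergy σ e.1 := by
    rw [erEdges, Multiset.map_map]
    rfl
  rw [h0]
  have h1 : ∀ e ∈ univ.filter (fun e : EdgeCand n => ω e = true),
      edgeEnergy σ e.1 = if xorE σ e.1 = true then (-1:ℝ) else 1 := by
    intro e _; exact edgeEnergy_eq σ e.1
  rw [Finset.sum_congr rfl h1, Finset.sum_ite]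
  set s := univ.filter (fun e : EdgeCand n => ω e = true) with hs
  have hA : (s.filter (fun e => xorE σ e.1 = true)).card = Xc (cutC σ) ω := by
    rw [Xc, cutC, hs]
    congr 1
    ext e
    simp only [Finset.mem_filter, Finset.mem_univ, true_and]
    tauto
  have hcard : (s.filter (fun e => xorE σ e.1 = true)).card
      + (s.filter (fun e => ¬ (xorE σ e.1 = true))).card = s.card :=
    Finset.card_filter_add_card_filter_not _
  have hXuniv : s.card = Xc univ ω := rfl
  simp only [Finset.sum_const, nsmul_eq_mul, mul_one, mul_neg_one]
  rw [hA]
  have : (s.filter (fun e => ¬ (xorE σ e.1 = true))).card = Xc univ ω - Xc (cutC σ) ω := by omega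
  rw [this, Nat.cast_sub (by omega)]
  ring

lemma hamiltonian_eval (J h : ℝ) (ω : EdgeCand n → Bool) (σ : Fin n → Bool) :
    hamiltonian J h (erEdges n ω) σ
      = -(J/2) * ((Xc univ ω : ℝ) - 2 * (Xc (cutC σ) ω : ℝ))
        - (h/2) * (2 * (nT σ : ℝ) - n) := by
  rw [hamiltonian, erEdges_sum, sum_spin]

lemma cutC_bot (hσ : ∀ v, σ v = false) : cutC (n := n) σ = ∅ := by
  rw [cutC, Finset.filter_eq_empty_iff]
  rintro ⟨e, he⟩ _
  induction e using Sym2.ind with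
  | _ v w => simp [xorE, hσ]

lemma hamiltonian_sub_bot (J h : ℝ) (ω : EdgeCand n → Bool) (σ : Fin n → Bool) :
    hamiltonian J h (erEdges n ω) σ - hamiltonian J h (erEdges n ω) (fun _ => false)
      = J * (Xc (cutC σ) ω : ℝ) - h * (nT σ : ℝ) := by
  rw [hamiltonian_eval, hamiltonian_eval, cutC_bot (fun _ => rfl)]
  have : nT (n := n) (fun _ => false) = 0 := by simp [nT]
  rw [this]
  simp only [Xc, Finset.filter_empty, Finset.card_empty, Nat.cast_zero]
  ring

/-! ### The monotone path -/

def mono (n : ℕ) (k : Fin (n+1)) : Fin n → Bool := fun v => decide ((v:ℕ) < (k:ℕ))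

lemma mono_zero : mono n 0 = (fun _ => false) := by
  funext v; simp [mono]

lemma mono_last : mono n (Fin.last n) = (fun _ => true) := by
  funext v; simp [mono, v.isLt]

lemma mono_flip (i : Fin n) : IsFlipStep (mono n i.castSucc) (mono n i.succ) := by
  refine ⟨i, funext fun v => ?_⟩
  by_cases hv : v = i
  · subst hv
    rw [Function.update_self]
    simp [mono]
  · rw [Function.update_of_ne hv]
    have hne : (v : ℕ) ≠ (i : ℕ) := fun hc => hv (Fin.ext hc)
    simp only [mono, Fin.val_succ, Fin.coe_castSucc]
    exact decide_eq_decide.2 (by omega)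

lemma nT_mono (k : Fin (n+1)) : nT (mono n k) = (k : ℕ) := by
  rw [nT]
  have he : univ.filter (fun v => mono n k v = true)
      = (Finset.range (k:ℕ)).attachFin (fun m hm => by
          have h1 := Finset.mem_range.1 hm
          have h2 := k.isLt
          omega) := by
    ext a
    simp [mono, Finset.mem_attachFin]
  rw [he, Finset.card_attachFin, Finset.card_range]

/-! ### nT along flips, discrete IVT -/

lemma nT_update_le (σ : Fin n → Bool) (v : Fin n) (b : Bool) :
    nT (Function.update σ v b) ≤ nT σ + 1 := by
  rw [nT, nT]
  have hsub : univ.filter (fun w => Function.update σ v b w = true)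
      ⊆ insert v (univ.filter (fun w => σ w = true)) := by
    intro w hw
    simp only [Finset.mem_filter, Finset.mem_univ, true_and] at hw
    by_cases hwv : w = v
    · exact Finset.mem_insert.2 (Or.inl hwv)
    · rw [Function.update_of_ne hwv] at hw
      exact Finset.mem_insert.2 (Or.inr (by simp [hw]))
  calc (univ.filter (fun w => Function.update σ v b w = true)).card
      ≤ (insert v (univ.filter (fun w => σ w = true))).card := Finset.card_le_card hsub
    _ ≤ _ + 1 := Finset.card_insert_le _ _

lemma discrete_ivt (g : ℕ → ℕ) (k m : ℕ) (h0 : g 0 ≤ m) (hk : m ≤ g k)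
    (hstep : ∀ i < k, g (i+1) ≤ g i + 1) : ∃ i ≤ k, g i = m := by
  induction k with
  | zero => exact ⟨0, le_refl 0, le_antisymm (by omega) (by omega)⟩
  | succ k ih =>
    by_cases hm : m ≤ g k
    · obtain ⟨i, hi, he⟩ := ih hm (fun i hi => hstep i (by omega))
      exact ⟨i, by omega, he⟩
    · have h1 := hstep k (by omega)
      exact ⟨k+1, le_refl _, by omega⟩

/-! ### commHeight bounds -/

lemma commHeight_le (H : (Fin n → Bool) → ℝ) (ξ ζ : Fin n → Bool)
    (k : ℕ) (γ : Fin (k+1) → (Fin n → Bool))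
    (h0 : γ 0 = ξ) (hl : γ (Fin.last k) = ζ)
    (hstep : ∀ i : Fin k, IsFlipStep (γ i.castSucc) (γ i.succ))
    (b : ℝ) (hb : ∀ i, H (γ i) ≤ b) : commHeight H ξ ζ ≤ b := by
  rw [commHeight]
  have hbdd : BddBelow { M : ℝ | ∃ (k : ℕ) (γ : Fin (k+1) → (Fin n → Bool)),
      γ 0 = ξ ∧ γ (Fin.last k) = ζ ∧
      (∀ i : Fin k, IsFlipStep (γ i.castSucc) (γ i.succ)) ∧
      M = Finset.univ.sup' ⟨0, Finset.mem_univ 0⟩ (fun i => H (γ i)) } := by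
    refine ⟨H ξ, fun M hM => ?_⟩
    obtain ⟨k', γ', h0', _, _, hM⟩ := hM
    rw [hM, ← h0']
    exact Finset.le_sup' (fun i => H (γ' i)) (Finset.mem_univ 0)
  have hmem : (Finset.univ.sup' ⟨0, Finset.mem_univ 0⟩ (fun i => H (γ i)))
      ∈ { M : ℝ | ∃ (k : ℕ) (γ : Fin (k+1) → (Fin n → Bool)),
      γ 0 = ξ ∧ γ (Fin.last k) = ζ ∧
      (∀ i : Fin k, IsFlipStep (γ i.castSucc) (γ i.succ)) ∧
      M = Finset.univ.sup' ⟨0, Finset.mem_univ 0⟩ (fun i => H (γ i)) } :=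
    ⟨k, γ, h0, hl, hstep, rfl⟩
  exact le_trans (csInf_le hbdd hmem) (Finset.sup'_le _ _ (fun i _ => hb i))

lemma le_commHeight (H : (Fin n → Bool) → ℝ) (ξ ζ : Fin n → Bool)
    (k₀ : ℕ) (γ₀ : Fin (k₀+1) → (Fin n → Bool))
    (h00 : γ₀ 0 = ξ) (hl0 : γ₀ (Fin.last k₀) = ζ)
    (hstep0 : ∀ i : Fin k₀, IsFlipStep (γ₀ i.castSucc) (γ₀ i.succ))
    (b : ℝ)
    (hb : ∀ (k : ℕ) (γ : Fin (k+1) → (Fin n → Bool)), γ 0 = ξ → γ (Fin.last k) = ζ →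
      (∀ i : Fin k, IsFlipStep (γ i.castSucc) (γ i.succ)) → ∃ i, b ≤ H (γ i)) :
    b ≤ commHeight H ξ ζ := by
  rw [commHeight]
  refine le_csInf ?_ ?_
  · exact ⟨_, k₀, γ₀, h00, hl0, hstep0, rfl⟩
  rintro M ⟨k, γ, h0, hl, hstep, hM⟩
  obtain ⟨i, hi⟩ := hb k γ h0 hl hstep
  rw [hM]
  exact le_trans hi (Finset.le_sup' (fun i => H (γ i)) (Finset.mem_univ i))

/-! ### Deterministic bounds on gammaStar -/

lemma gammaStar_le (J h : ℝ) (hJ : 0 ≤ J) (hh : 0 ≤ h) (ω : EdgeCand n → Bool) (C : ℝ)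
    (hA : ∀ k : Fin (n+1), (Xc (cutC (mono n k)) ω : ℝ) ≤ C) :
    gammaStar (hamiltonian J h (erEdges n ω)) ≤ J * C := by
  rw [gammaStar]
  have hch := commHeight_le (hamiltonian J h (erEdges n ω)) _ _ n (mono n)
    mono_zero mono_last mono_flip
    (hamiltonian J h (erEdges n ω) (fun _ => false) + J * C) ?_
  · linarith
  intro k
  have hd := hamiltonian_sub_bot J h ω (mono n k)
  have h1 : J * (Xc (cutC (mono n k)) ω : ℝ) ≤ J * C := mul_le_mul_of_nonneg_left (hA k) hJ
  have h2 : (0:ℝ) ≤ h * (nT (mono n k) : ℝ) := by positivity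
  linarith

lemma le_gammaStar (J h : ℝ) (hJ : 0 ≤ J) (hh : 0 ≤ h) (ω : EdgeCand n → Bool) (C' : ℝ)
    (hB : ∀ σ : Fin n → Bool, nT σ = n / 2 → C' ≤ (Xc (cutC σ) ω : ℝ)) :
    J * C' - h * ((n / 2 : ℕ) : ℝ) ≤ gammaStar (hamiltonian J h (erEdges n ω)) := by
  rw [gammaStar]
  have hch := le_commHeight (hamiltonian J h (erEdges n ω)) _ _ n (mono n)
    mono_zero mono_last mono_flip
    (hamiltonian J h (erEdges n ω) (fun _ => false) + (J * C' - h * ((n / 2 : ℕ) : ℝ))) ?_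
  · linarith
  intro k γ h0 hl hstep
  -- discrete IVT on the number of +1 spins along the path
  set g : ℕ → ℕ := fun j => nT (γ ⟨min j k, by omega⟩) with hg
  have hg0 : g 0 = 0 := by
    have he : (⟨min 0 k, by omega⟩ : Fin (k+1)) = 0 := Fin.ext (by simp)
    rw [hg]
    simp only [he, h0]
    simp [nT]
  have hgk : g k = n := by
    have he : (⟨min k k, by omega⟩ : Fin (k+1)) = Fin.last k := Fin.ext (by simp [Fin.last])
    rw [hg]
    simp only [he, hl]
    simp [nT]
  have hgstep : ∀ i < k, g (i+1) ≤ g i + 1 := by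
    intro i hik
    obtain ⟨v, hupd⟩ := hstep ⟨i, hik⟩
    have e1 : (⟨i, hik⟩ : Fin k).castSucc = (⟨min i k, by omega⟩ : Fin (k+1)) :=
      Fin.ext (by simp; omega)
    have e2 : (⟨i, hik⟩ : Fin k).succ = (⟨min (i+1) k, by omega⟩ : Fin (k+1)) :=
      Fin.ext (by simp; omega)
    have hb2 : g (i+1) = nT (γ (⟨i, hik⟩ : Fin k).succ) :=
      congrArg (fun x => nT (γ x)) (by exact e2.symm)
    have hb1 : g i = nT (γ (⟨i, hik⟩ : Fin k).castSucc) :=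
      congrArg (fun x => nT (γ x)) (by exact e1.symm)
    rw [hb2, hb1, hupd]
    exact nT_update_le _ _ _
  obtain ⟨i, hik, him⟩ := discrete_ivt g k (n/2) (by omega) (by omega) hgstep
  refine ⟨⟨min i k, by omega⟩, ?_⟩
  have hd := hamiltonian_sub_bot J h ω (γ ⟨min i k, by omega⟩)
  have hnm : nT (γ ⟨min i k, by omega⟩) = n / 2 := him
  have hXB := hB _ hnm
  have h1 : J * C' ≤ J * (Xc (cutC (γ ⟨min i k, by omega⟩)) ω : ℝ) :=
    mul_le_mul_of_nonneg_left hXB hJ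
  rw [hnm] at hd
  linarith

/-! ### Cardinality of cut sets -/

lemma xorE_mk (σ : Fin n → Bool) (a b : Fin n) :
    xorE σ s(a, b) = xor (σ a) (σ b) := rfl

lemma card_filter_false (σ : Fin n → Bool) :
    (univ.filter (fun v => σ v = false)).card = n - nT σ := by
  have h3 := Finset.card_filter_add_card_filter_not
    (s := (univ : Finset (Fin n))) (p := fun v => σ v = true)
  simp only [Finset.card_univ, Fintype.card_fin] at h3
  have he : univ.filter (fun v => ¬ (σ v = true)) = univ.filter (fun v => σ v = false) := by
    ext v; simp
  rw [he] at h3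
  unfold nT
  omega

lemma le_card_cutC (σ : Fin n → Bool) : nT σ * (n - nT σ) ≤ (cutC σ).card := by
  classical
  have himg : ((cutC σ).image Subtype.val).card = (cutC σ).card :=
    Finset.card_image_of_injective _ Subtype.val_injective
  rw [← himg]
  have hprod : nT σ * (n - nT σ)
      = ((univ.filter (fun v => σ v = true)) ×ˢ (univ.filter (fun v => σ v = false))).card := by
    rw [Finset.card_product, card_filter_false]
    rfl
  rw [hprod]
  apply Finset.card_le_card_of_injOn (fun p => Sym2.mk p.1 p.2)
  · rintro ⟨a, b⟩ hp
    simp only [Finset.mem_coe, Finset.mem_product, Finset.mem_filter, Finset.mem_univ, true_and] at hp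
    have hab : a ≠ b := fun hc => by rw [hc, hp.2] at hp; exact absurd hp.1 (by simp [hp.2])
    refine Finset.mem_image.2 ⟨⟨s(a,b), by simp [Sym2.mk_isDiag_iff, hab]⟩, ?_, rfl⟩
    simp only [cutC, Finset.mem_filter, Finset.mem_univ, true_and]
    rw [xorE_mk, hp.1, hp.2]
    rfl
  · rintro ⟨a, b⟩ hp ⟨a', b'⟩ hp' hab
    simp only [Finset.coe_filter, Set.mem_setOf_eq, Finset.mem_coe, Finset.mem_product,
      Finset.mem_filter, Finset.mem_univ, true_and] at hp hp'
    rcases Sym2.eq_iff.1 hab with ⟨h1, h2⟩ | ⟨h1, h2⟩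
    · exact Prod.ext h1 h2
    · exfalso
      rw [show a = b' from h1] at hp
      rw [hp'.2] at hp
      exact absurd hp.1 (by simp)

lemma card_cutC_le (σ : Fin n → Bool) : (cutC σ).card ≤ nT σ * (n - nT σ) := by
  classical
  have himg : ((cutC σ).image Subtype.val).card = (cutC σ).card :=
    Finset.card_image_of_injective _ Subtype.val_injective
  rw [← himg]
  have hprod : nT σ * (n - nT σ)
      = ((univ.filter (fun v => σ v = true)) ×ˢ (univ.filter (fun v => σ v = false))).card := by
    rw [Finset.card_product, card_filter_false]
    rfl
  rw [hprod]
  have hxor : ∀ e ∈ (cutC σ).image Subtype.val, xorE σ e = true := by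
    intro e he
    obtain ⟨e', he', rfl⟩ := Finset.mem_image.1 he
    exact (Finset.mem_filter.1 he').2
  have hout : ∀ e : Sym2 (Fin n), Sym2.mk (Quot.out e).1 (Quot.out e).2 = e := fun e => Quot.out_eq e
  apply Finset.card_le_card_of_injOn
    (fun e => if σ (Quot.out e).1 = true then Quot.out e else ((Quot.out e).2, (Quot.out e).1))
  · intro e he
    have hx : xorE σ e = true := hxor e he
    rw [← hout e] at hx
    have hx2 : xor (σ (Quot.out e).1) (σ (Quot.out e).2) = true := hx
    clear hx hxor hprod himg he
    simp only [Finset.mem_coe, Finset.mem_product, Finset.mem_filter, Finset.mem_univ, true_and]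
    cases h1 : σ (Quot.out e).1 <;> cases h2 : σ (Quot.out e).2 <;>
      rw [h1, h2] at hx2 <;> simp_all
  · intro e he e' he' heq
    have he2 : (fun q : Fin n × Fin n => Sym2.mk q.1 q.2) (if σ (Quot.out e).1 = true then Quot.out e
        else ((Quot.out e).2, (Quot.out e).1)) = e := by
      split
      · exact hout e
      · conv_rhs => rw [← hout e]
        exact Sym2.eq_swap
    have he2' : (fun q : Fin n × Fin n => Sym2.mk q.1 q.2) (if σ (Quot.out e').1 = true then Quot.out e'
        else ((Quot.out e').2, (Quot.out e').1)) = e' := by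
      split
      · exact hout e'
      · conv_rhs => rw [← hout e']
        exact Sym2.eq_swap
    rw [← he2, ← he2']
    exact congrArg (fun q : Fin n × Fin n => Sym2.mk q.1 q.2) heq

/-! ### Probability machinery -/

noncomputable def wt (n : ℕ) (p : ℝ) (ω : EdgeCand n → Bool) : ℝ :=
  p ^ (Finset.univ.filter (fun e : EdgeCand n => ω e = true)).card *
    (1 - p) ^ (Finset.univ.filter (fun e : EdgeCand n => ω e = false)).card

lemma wt_nonneg {p : ℝ} (hp0 : 0 ≤ p) (hp1 : p ≤ 1) (ω : EdgeCand n → Bool) :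
    0 ≤ wt n p ω :=
  mul_nonneg (pow_nonneg hp0 _) (pow_nonneg (by linarith) _)

lemma erProb_eq_sum_wt (p : ℝ) (A : Finset (EdgeCand n → Bool)) :
    erProb n p A = ∑ ω ∈ A, wt n p ω := rfl

lemma erProb_nonneg {p : ℝ} (hp0 : 0 ≤ p) (hp1 : p ≤ 1) (A : Finset (EdgeCand n → Bool)) :
    0 ≤ erProb n p A := by
  rw [erProb_eq_sum_wt]
  exact Finset.sum_nonneg (fun ω _ => wt_nonneg hp0 hp1 ω)

lemma erProb_mono {p : ℝ} (hp0 : 0 ≤ p) (hp1 : p ≤ 1) {A B : Finset (EdgeCand n → Bool)}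
    (hAB : A ⊆ B) : erProb n p A ≤ erProb n p B := by
  rw [erProb_eq_sum_wt, erProb_eq_sum_wt]
  exact Finset.sum_le_sum_of_subset_of_nonneg hAB (fun ω _ _ => wt_nonneg hp0 hp1 ω)

lemma erProb_union_le {p : ℝ} (hp0 : 0 ≤ p) (hp1 : p ≤ 1) (A B : Finset (EdgeCand n → Bool)) :
    erProb n p (A ∪ B) ≤ erProb n p A + erProb n p B := by
  classical
  rw [erProb_eq_sum_wt, erProb_eq_sum_wt, erProb_eq_sum_wt]
  have h := Finset.sum_union_inter (s₁ := A) (s₂ := B) (f := wt n p)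
  have h2 : 0 ≤ ∑ ω ∈ A ∩ B, wt n p ω := Finset.sum_nonneg (fun ω _ => wt_nonneg hp0 hp1 ω)
  linarith

lemma erProb_biUnion_le {p : ℝ} (hp0 : 0 ≤ p) (hp1 : p ≤ 1) {ι : Type*} [DecidableEq ι]
    (s : Finset ι) (t : ι → Finset (EdgeCand n → Bool)) :
    erProb n p (s.biUnion t) ≤ ∑ i ∈ s, erProb n p (t i) := by
  classical
  induction s using Finset.induction_on with
  | empty => simp [erProb]
  | @insert a s ha ih =>
    rw [Finset.biUnion_insert, Finset.sum_insert ha]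
    calc erProb n p (t a ∪ s.biUnion t) ≤ erProb n p (t a) + erProb n p (s.biUnion t) :=
        erProb_union_le hp0 hp1 _ _
      _ ≤ _ := by linarith

lemma wt_prod (p : ℝ) (ω : EdgeCand n → Bool) :
    wt n p ω = ∏ e : EdgeCand n, (if ω e = true then p else 1 - p) := by
  have he : Finset.univ.filter (fun e : EdgeCand n => ω e = false)
      = Finset.univ.filter (fun e : EdgeCand n => ¬ (ω e = true)) := by
    ext e; simp
  rw [wt, he, Finset.prod_ite, Finset.prod_const, Finset.prod_const]

lemma pow_Xc_prod (lam : ℝ) (T : Finset (EdgeCand n)) (ω : EdgeCand n → Bool) :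
    lam ^ (Xc T ω) = ∏ e : EdgeCand n, (if ω e = true ∧ e ∈ T then lam else 1) := by
  rw [Xc, ← Finset.prod_const lam]
  have he : T.filter (fun e => ω e = true)
      = Finset.univ.filter (fun e : EdgeCand n => ω e = true ∧ e ∈ T) := by
    ext e; simp [and_comm]
  rw [he, Finset.prod_filter]

lemma mgf_eq (p lam : ℝ) (T : Finset (EdgeCand n)) :
    ∑ ω : EdgeCand n → Bool, wt n p ω * lam ^ (Xc T ω)
      = (1 + p * (lam - 1)) ^ T.card := by
  classical
  have h1 : ∀ ω : EdgeCand n → Bool, wt n p ω * lam ^ (Xc T ω)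
      = ∏ e : EdgeCand n,
          ((if ω e = true then p else 1 - p) * (if ω e = true ∧ e ∈ T then lam else 1)) := by
    intro ω
    rw [Finset.prod_mul_distrib, ← wt_prod, ← pow_Xc_prod]
  rw [Finset.sum_congr rfl (fun ω _ => h1 ω)]
  have h2 := Finset.prod_univ_sum (fun _ : EdgeCand n => (Finset.univ : Finset Bool))
    (fun e b => (if b = true then p else 1 - p) * (if b = true ∧ e ∈ T then lam else 1))
  rw [Fintype.piFinset_univ] at h2
  rw [← h2]
  have h3 : ∀ e : EdgeCand n,
      (∑ b : Bool, (if b = true then p else 1 - p) * (if b = true ∧ e ∈ T then lam else 1))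
      = if e ∈ T then 1 + p * (lam - 1) else 1 := by
    intro e
    rw [Fintype.sum_bool]
    by_cases he : e ∈ T <;> simp [he] <;> ring
  rw [Finset.prod_congr rfl (fun e _ => h3 e), Finset.prod_ite, Finset.prod_const,
    Finset.prod_const, one_pow, mul_one, Finset.filter_univ_mem]

lemma chernoff_core {p : ℝ} (hp0 : 0 ≤ p) (hp1 : p ≤ 1) (lam a : ℝ) (hlam : 0 < lam)
    (T : Finset (EdgeCand n)) (A : Finset (EdgeCand n → Bool))
    (hA : ∀ ω ∈ A, lam ^ (a : ℝ) ≤ lam ^ ((Xc T ω : ℕ) : ℝ)) :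
    erProb n p A ≤ (1 + p * (lam - 1)) ^ T.card * lam ^ (-a) := by
  have key : erProb n p A * lam ^ (a:ℝ) ≤ (1 + p * (lam - 1)) ^ T.card := by
    rw [erProb_eq_sum_wt, Finset.sum_mul]
    calc ∑ ω ∈ A, wt n p ω * lam ^ (a:ℝ)
        ≤ ∑ ω ∈ A, wt n p ω * lam ^ (Xc T ω) := by
          apply Finset.sum_le_sum
          intro ω hω
          have := hA ω hω
          rw [Real.rpow_natCast] at this
          exact mul_le_mul_of_nonneg_left this (wt_nonneg hp0 hp1 ω)
      _ ≤ ∑ ω : EdgeCand n → Bool, wt n p ω * lam ^ (Xc T ω) := by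
          apply Finset.sum_le_sum_of_subset_of_nonneg (Finset.subset_univ A)
          intro ω _ _
          exact mul_nonneg (wt_nonneg hp0 hp1 ω) (pow_nonneg (le_of_lt hlam) _)
      _ = _ := mgf_eq p lam T
  have hpow : (0:ℝ) < lam ^ (a:ℝ) := Real.rpow_pos_of_pos hlam a
  rw [Real.rpow_neg (le_of_lt hlam), ← div_eq_mul_inv]
  rw [le_div_iff₀ hpow]
  exact key

/-! ### Chernoff tail bounds -/

lemma chernoff_ub {p : ℝ} (hp0 : 0 ≤ p) (hp1 : p ≤ 1) (lam a : ℝ) (hlam : 1 ≤ lam)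
    (T : Finset (EdgeCand n)) :
    erProb n p (Finset.univ.filter (fun ω : EdgeCand n → Bool => a ≤ (Xc T ω : ℝ)))
      ≤ Real.exp ((T.card : ℝ) * (p * (lam - 1))) * lam ^ (-a) := by
  have hlam0 : 0 < lam := lt_of_lt_of_le one_pos hlam
  have hcore := chernoff_core hp0 hp1 lam a hlam0 T
    (Finset.univ.filter (fun ω : EdgeCand n → Bool => a ≤ (Xc T ω : ℝ)))
    (fun ω hω => Real.rpow_le_rpow_of_exponent_le hlam (Finset.mem_filter.1 hω).2)
  refine le_trans hcore (mul_le_mul_of_nonneg_right ?_ (Real.rpow_nonneg (le_of_lt hlam0) _))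
  have h1 : 1 + p * (lam - 1) ≤ Real.exp (p * (lam - 1)) := by
    have := Real.add_one_le_exp (p * (lam - 1))
    linarith
  have h0 : 0 ≤ 1 + p * (lam - 1) := by nlinarith
  calc (1 + p * (lam - 1)) ^ T.card ≤ (Real.exp (p * (lam - 1))) ^ T.card :=
      pow_le_pow_left₀ h0 h1 _
    _ = Real.exp ((T.card : ℝ) * (p * (lam - 1))) := (Real.exp_nat_mul _ _).symm

lemma chernoff_lb {p : ℝ} (hp0 : 0 ≤ p) (hp1 : p ≤ 1) (lam a : ℝ)
    (hlam0 : 0 < lam) (hlam1 : lam ≤ 1) (T : Finset (EdgeCand n)) :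
    erProb n p (Finset.univ.filter (fun ω : EdgeCand n → Bool => (Xc T ω : ℝ) ≤ a))
      ≤ Real.exp ((T.card : ℝ) * (p * (lam - 1))) * lam ^ (-a) := by
  have hcore := chernoff_core hp0 hp1 lam a hlam0 T
    (Finset.univ.filter (fun ω : EdgeCand n → Bool => (Xc T ω : ℝ) ≤ a))
    (fun ω hω => Real.rpow_le_rpow_of_exponent_ge hlam0 hlam1 (Finset.mem_filter.1 hω).2)
  refine le_trans hcore (mul_le_mul_of_nonneg_right ?_ (Real.rpow_nonneg (le_of_lt hlam0) _))
  have h1 : 1 + p * (lam - 1) ≤ Real.exp (p * (lam - 1)) := by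
    have := Real.add_one_le_exp (p * (lam - 1))
    linarith
  have h0 : 0 ≤ 1 + p * (lam - 1) := by nlinarith
  calc (1 + p * (lam - 1)) ^ T.card ≤ (Real.exp (p * (lam - 1))) ^ T.card :=
      pow_le_pow_left₀ h0 h1 _
    _ = Real.exp ((T.card : ℝ) * (p * (lam - 1))) := (Real.exp_nat_mul _ _).symm

/-! ### Specialized bad-event bounds -/

lemma nat_quarter_sq (k n : ℕ) (hk : k ≤ n) : ((k * (n - k) : ℕ) : ℝ) ≤ (n:ℝ)^2 / 4 := by
  rw [Nat.cast_mul, Nat.cast_sub hk]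
  nlinarith [sq_nonneg ((n:ℝ) - 2*k), Nat.cast_nonneg (α := ℝ) k]

lemma nat_half_prod (n : ℕ) : (n:ℝ)^2 - 1 ≤ 4 * (((n/2) * (n - n/2) : ℕ) : ℝ) := by
  have key : n*n ≤ 4 * ((n/2) * (n - n/2)) + 1 := by
    obtain ⟨q, hq⟩ | ⟨q, hq⟩ := Nat.even_or_odd n
    · have h2 : n / 2 = q := by omega
      have h3 : n - n/2 = q := by omega
      rw [h3, h2]
      nlinarith
    · have h2 : n / 2 = q := by omega
      have h3 : n - n/2 = q + 1 := by omega
      rw [h3, h2]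
      nlinarith
  have hc := (Nat.cast_le (α := ℝ)).2 key
  push_cast at hc
  rw [Nat.cast_mul]
  have hsq : (n:ℝ)^2 = (n:ℝ)*(n:ℝ) := by ring
  linarith

lemma badA_bound (fn δ : ℝ) {n : ℕ} (hn : 1 ≤ n) (hf0 : 0 < fn) (hfn : fn ≤ n)
    (hδ0 : 0 < δ) (k : Fin (n+1)) :
    erProb n (fn / n) (Finset.univ.filter (fun ω : EdgeCand n → Bool =>
        (1+δ) * ((n:ℝ) * fn / 4) ≤ (Xc (cutC (mono n k)) ω : ℝ)))
      ≤ Real.exp (-(((1+δ) * Real.log (1+δ) - δ) * ((n:ℝ) * fn / 4))) := by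
  have hn0 : (0:ℝ) < n := by exact_mod_cast hn
  have hp0 : 0 ≤ fn / n := by positivity
  have hp1 : fn / n ≤ 1 := by rw [div_le_one hn0]; exact hfn
  have hcb := chernoff_ub (n := n) hp0 hp1 (1+δ) ((1+δ) * ((n:ℝ) * fn / 4)) (by linarith)
    (cutC (mono n k))
  refine le_trans hcb ?_
  have hcard : ((cutC (mono n k)).card : ℝ) ≤ (n:ℝ)^2 / 4 := by
    have h1 := card_cutC_le (mono n k)
    rw [nT_mono] at h1
    have h2 := nat_quarter_sq (k : ℕ) n (by have := k.isLt; omega)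
    calc ((cutC (mono n k)).card : ℝ) ≤ (((k:ℕ) * (n - (k:ℕ)) : ℕ) : ℝ) := by exact_mod_cast h1
      _ ≤ (n:ℝ)^2 / 4 := h2
  have hexp1 : ((cutC (mono n k)).card : ℝ) * (fn / n * ((1+δ) - 1))
      ≤ ((n:ℝ) * fn / 4) * δ := by
    have hq : (n:ℝ)^2 / 4 * (fn / n * δ) = ((n:ℝ) * fn / 4) * δ := by
      field_simp
    have hd0 : 0 ≤ fn / n * ((1+δ) - 1) := by
      have h00 : 0 ≤ fn / n := by positivity
      nlinarith
    calc ((cutC (mono n k)).card : ℝ) * (fn / n * ((1+δ) - 1))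
        ≤ (n:ℝ)^2 / 4 * (fn / n * ((1+δ) - 1)) := mul_le_mul_of_nonneg_right hcard hd0
      _ = ((n:ℝ) * fn / 4) * δ := by rw [← hq]; ring_nf
  have hrpow : (1+δ) ^ (-((1+δ) * ((n:ℝ) * fn / 4)))
      = Real.exp (Real.log (1+δ) * (-((1+δ) * ((n:ℝ) * fn / 4)))) :=
    Real.rpow_def_of_pos (by linarith) _
  rw [hrpow, ← Real.exp_add]
  apply Real.exp_le_exp.2
  have hlog : 0 ≤ Real.log (1+δ) := Real.log_nonneg (by linarith)
  nlinarith [hexp1]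

lemma badB_bound (fn δ : ℝ) {n : ℕ} (hn : 1 ≤ n) (hf0 : 0 < fn) (hfn : fn ≤ n)
    (hδ0 : 0 < δ) (hδ1 : δ < 1) (σ : Fin n → Bool) (hσ : nT σ = n / 2) :
    erProb n (fn / n) (Finset.univ.filter (fun ω : EdgeCand n → Bool =>
        (Xc (cutC σ) ω : ℝ) ≤ (1-δ) * ((n:ℝ) * fn / 4)))
      ≤ Real.exp 1 * Real.exp (-((δ + (1-δ) * Real.log (1-δ)) * ((n:ℝ) * fn / 4))) := by
  have hn0 : (0:ℝ) < n := by exact_mod_cast hn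
  have hp0 : 0 ≤ fn / n := by positivity
  have hp1 : fn / n ≤ 1 := by rw [div_le_one hn0]; exact hfn
  have hcb := chernoff_lb (n := n) hp0 hp1 (1-δ) ((1-δ) * ((n:ℝ) * fn / 4))
    (by linarith) (by linarith) (cutC σ)
  refine le_trans hcb ?_
  have hcard : ((n:ℝ)^2 - 1) / 4 ≤ ((cutC σ).card : ℝ) := by
    have h1 := le_card_cutC σ
    rw [hσ] at h1
    have h2 := nat_half_prod n
    have h3 : (((n/2) * (n - n/2) : ℕ) : ℝ) ≤ ((cutC σ).card : ℝ) := by exact_mod_cast h1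
    linarith
  have hexp1 : ((cutC σ).card : ℝ) * (fn / n * ((1-δ) - 1))
      ≤ -(δ * ((n:ℝ) * fn / 4)) + δ / 4 := by
    have hd0 : fn / n * ((1-δ) - 1) ≤ 0 := by
      have : 0 ≤ fn / n * δ := by positivity
      nlinarith
    have step1 : ((cutC σ).card : ℝ) * (fn / n * ((1-δ) - 1))
        ≤ ((n:ℝ)^2 - 1) / 4 * (fn / n * ((1-δ) - 1)) := by
      apply mul_le_mul_of_nonpos_right hcard hd0
    have hfn4 : fn / n ≤ 1 := hp1
    have step2 : ((n:ℝ)^2 - 1) / 4 * (fn / n * ((1-δ) - 1))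
        = -(δ * ((n:ℝ) * fn / 4)) + δ * (fn / n) / 4 := by
      field_simp
      ring
    have step3 : δ * (fn / n) / 4 ≤ δ / 4 := by nlinarith
    linarith
  have hrpow : (1-δ) ^ (-((1-δ) * ((n:ℝ) * fn / 4)))
      = Real.exp (Real.log (1-δ) * (-((1-δ) * ((n:ℝ) * fn / 4)))) :=
    Real.rpow_def_of_pos (by linarith) _
  rw [hrpow, ← Real.exp_add, ← Real.exp_add]
  apply Real.exp_le_exp.2
  have hδ4 : δ / 4 ≤ 1 := by linarith
  nlinarith [hexp1]

/-! ### The main per-n estimate -/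

set_option maxHeartbeats 2000000 in
open Classical in
lemma main_estimate (J h : ℝ) (hJ : 0 < J) (hh : 0 < h) {n : ℕ} (hn : 1 ≤ n)
    (fn ε δ : ℝ) (hf0 : 0 < fn) (hfn : fn ≤ n) (hε : 0 < ε)
    (hδ0 : 0 < δ) (hδ1 : δ < 1) (hδε : δ ≤ ε)
    (hc1 : 8 ≤ ((1+δ) * Real.log (1+δ) - δ) * fn)
    (hc2 : 8 ≤ (δ + (1-δ) * Real.log (1-δ)) * fn)
    (hhf : 2*h ≤ J * fn * (ε - δ)) :
    erProb n (fn / n) (Finset.univ.filter (fun ω : EdgeCand n → Bool =>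
        ε < |gammaStar (hamiltonian J h (erEdges n ω)) / ((1/4) * J * n * fn) - 1|))
      ≤ (1 + Real.exp 1) * (2 * Real.exp (-2))^n := by
  have hn0 : (0:ℝ) < n := by exact_mod_cast hn
  have hp0 : 0 ≤ fn / n := by positivity
  have hp1 : fn / n ≤ 1 := by rw [div_le_one hn0]; exact hfn
  set μ : ℝ := (n:ℝ) * fn / 4 with hμ
  have hμ0 : 0 < μ := by rw [hμ]; positivity
  set badA : Finset (EdgeCand n → Bool) := Finset.univ.filter (fun ω : EdgeCand n → Bool =>
      ∃ k : Fin (n+1), (1+δ) * μ ≤ (Xc (cutC (mono n k)) ω : ℝ)) with hbadA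
  set badB : Finset (EdgeCand n → Bool) := Finset.univ.filter (fun ω : EdgeCand n → Bool =>
      ∃ σ : Fin n → Bool, nT σ = n / 2 ∧ (Xc (cutC σ) ω : ℝ) ≤ (1-δ) * μ) with hbadB
  -- Step 1 : inclusion of the deviation event in the union of bad events
  have hsub : Finset.univ.filter (fun ω : EdgeCand n → Bool =>
        ε < |gammaStar (hamiltonian J h (erEdges n ω)) / ((1/4) * J * n * fn) - 1|)
      ⊆ badA ∪ badB := by
    intro ω hω
    simp only [Finset.mem_filter, Finset.mem_univ, true_and] at hω
    by_contra hcon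
    rw [Finset.mem_union] at hcon
    push_neg at hcon
    obtain ⟨hA, hB⟩ := hcon
    rw [hbadA, Finset.mem_filter] at hA
    rw [hbadB, Finset.mem_filter] at hB
    push_neg at hA hB
    have hA' := hA (Finset.mem_univ ω)
    have hB' := hB (Finset.mem_univ ω)
    have hup := gammaStar_le J h hJ.le hh.le ω ((1+δ)*μ)
      (fun k => (hA' k).le)
    have hlo := le_gammaStar J h hJ.le hh.le ω ((1-δ)*μ)
      (fun σ hσ => (hB' σ hσ).le)
    have hJμ : 0 < J * μ := by positivity
    have hden : (1/4) * J * (n:ℝ) * fn = J * μ := by rw [hμ]; ring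
    rw [hden] at hω
    have hub2 : gammaStar (hamiltonian J h (erEdges n ω)) / (J*μ) ≤ 1 + δ := by
      rw [div_le_iff₀ hJμ]
      nlinarith [hup]
    have hhalf : ((n/2 : ℕ) : ℝ) ≤ (n:ℝ)/2 := by
      have h2 : 2 * (n/2) ≤ n := by omega
      have h3 : (2:ℝ) * ((n/2 : ℕ):ℝ) ≤ (n:ℝ) := by exact_mod_cast h2
      linarith
    have hlb2 : 1 - ε ≤ gammaStar (hamiltonian J h (erEdges n ω)) / (J*μ) := by
      rw [le_div_iff₀ hJμ]
      have e2 : h * ((n/2:ℕ):ℝ) ≤ h * ((n:ℝ)/2) := mul_le_mul_of_nonneg_left hhalf hh.le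
      have e4 : (2*h) * ((n:ℝ)/4) ≤ (J*fn*(ε-δ)) * ((n:ℝ)/4) :=
        mul_le_mul_of_nonneg_right hhf (by positivity)
      have e5 : (J*fn*(ε-δ))*((n:ℝ)/4) = (ε-δ)*(J*μ) := by rw [hμ]; ring
      nlinarith [hlo]
    have habs : |gammaStar (hamiltonian J h (erEdges n ω)) / (J*μ) - 1| ≤ ε :=
      abs_le.2 ⟨by linarith, by linarith⟩
    exact absurd hω (not_lt.2 habs)
  -- Step 2 : union bounds
  have hAbi : badA ⊆ Finset.univ.biUnion (fun k : Fin (n+1) =>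
      Finset.univ.filter (fun ω : EdgeCand n → Bool =>
        (1+δ) * μ ≤ (Xc (cutC (mono n k)) ω : ℝ))) := by
    intro ω hω
    rw [hbadA, Finset.mem_filter] at hω
    obtain ⟨k, hk⟩ := hω.2
    exact Finset.mem_biUnion.2 ⟨k, Finset.mem_univ k,
      Finset.mem_filter.2 ⟨Finset.mem_univ ω, hk⟩⟩
  have hBbi : badB ⊆ (Finset.univ.filter (fun σ : Fin n → Bool => nT σ = n / 2)).biUnion
      (fun σ => Finset.univ.filter (fun ω : EdgeCand n → Bool =>
        (Xc (cutC σ) ω : ℝ) ≤ (1-δ) * μ)) := by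
    intro ω hω
    rw [hbadB, Finset.mem_filter] at hω
    obtain ⟨σ, hσ, hσ2⟩ := hω.2
    exact Finset.mem_biUnion.2 ⟨σ, Finset.mem_filter.2 ⟨Finset.mem_univ σ, hσ⟩,
      Finset.mem_filter.2 ⟨Finset.mem_univ ω, hσ2⟩⟩
  -- Step 3 : individual bounds
  have hexpA : Real.exp (-(((1+δ) * Real.log (1+δ) - δ) * μ)) ≤ Real.exp (-(2*(n:ℝ))) := by
    apply Real.exp_le_exp.2
    have : 2*(n:ℝ) ≤ ((1+δ) * Real.log (1+δ) - δ) * μ := by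
      have h8 : 8 * ((n:ℝ)/4) ≤ (((1+δ) * Real.log (1+δ) - δ) * fn) * ((n:ℝ)/4) :=
        mul_le_mul_of_nonneg_right hc1 (by positivity)
      rw [hμ]
      nlinarith
    linarith
  have hexpB : Real.exp (-((δ + (1-δ) * Real.log (1-δ)) * μ)) ≤ Real.exp (-(2*(n:ℝ))) := by
    apply Real.exp_le_exp.2
    have : 2*(n:ℝ) ≤ (δ + (1-δ) * Real.log (1-δ)) * μ := by
      have h8 : 8 * ((n:ℝ)/4) ≤ ((δ + (1-δ) * Real.log (1-δ)) * fn) * ((n:ℝ)/4) :=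
        mul_le_mul_of_nonneg_right hc2 (by positivity)
      rw [hμ]
      nlinarith
    linarith
  have hA3 : erProb n (fn/n) badA ≤ ((n:ℝ)+1) * Real.exp (-(2*(n:ℝ))) := by
    calc erProb n (fn/n) badA
        ≤ erProb n (fn/n) (Finset.univ.biUnion (fun k : Fin (n+1) =>
            Finset.univ.filter (fun ω : EdgeCand n → Bool =>
              (1+δ) * μ ≤ (Xc (cutC (mono n k)) ω : ℝ)))) := erProb_mono hp0 hp1 hAbi
      _ ≤ ∑ k : Fin (n+1), erProb n (fn/n) (Finset.univ.filter
            (fun ω : EdgeCand n → Bool => (1+δ) * μ ≤ (Xc (cutC (mono n k)) ω : ℝ))) :=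
          erProb_biUnion_le hp0 hp1 _ _
      _ ≤ ∑ _k : Fin (n+1), Real.exp (-(2*(n:ℝ))) := by
          apply Finset.sum_le_sum
          intro k _
          exact le_trans (badA_bound fn δ hn hf0 hfn hδ0 k) hexpA
      _ = ((n:ℝ)+1) * Real.exp (-(2*(n:ℝ))) := by
          rw [Finset.sum_const, Finset.card_univ, Fintype.card_fin, nsmul_eq_mul]
          push_cast
          ring
  have hB3 : erProb n (fn/n) badB ≤ (2:ℝ)^n * (Real.exp 1 * Real.exp (-(2*(n:ℝ)))) := by
    calc erProb n (fn/n) badB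
        ≤ erProb n (fn/n) ((Finset.univ.filter (fun σ : Fin n → Bool => nT σ = n / 2)).biUnion
            (fun σ => Finset.univ.filter (fun ω : EdgeCand n → Bool =>
              (Xc (cutC σ) ω : ℝ) ≤ (1-δ) * μ))) := erProb_mono hp0 hp1 hBbi
      _ ≤ ∑ σ ∈ Finset.univ.filter (fun σ : Fin n → Bool => nT σ = n / 2),
            erProb n (fn/n) (Finset.univ.filter (fun ω : EdgeCand n → Bool =>
              (Xc (cutC σ) ω : ℝ) ≤ (1-δ) * μ)) := erProb_biUnion_le hp0 hp1 _ _
      _ ≤ ∑ σ ∈ Finset.univ.filter (fun σ : Fin n → Bool => nT σ = n / 2),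
            (Real.exp 1 * Real.exp (-(2*(n:ℝ)))) := by
          apply Finset.sum_le_sum
          intro σ hσ
          have hσ2 : nT σ = n / 2 := (Finset.mem_filter.1 hσ).2
          refine le_trans (badB_bound fn δ hn hf0 hfn hδ0 hδ1 σ hσ2) ?_
          exact mul_le_mul_of_nonneg_left hexpB (Real.exp_nonneg 1)
      _ ≤ (2:ℝ)^n * (Real.exp 1 * Real.exp (-(2*(n:ℝ)))) := by
          rw [Finset.sum_const, nsmul_eq_mul]
          apply mul_le_mul_of_nonneg_right _ (by positivity)
          have hcard : (Finset.univ.filter (fun σ : Fin n → Bool => nT σ = n / 2)).card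
              ≤ 2^n := by
            calc _ ≤ (Finset.univ : Finset (Fin n → Bool)).card := Finset.card_filter_le _ _
              _ = 2^n := by
                  rw [Finset.card_univ]
                  simp [Fintype.card_fun]
          calc ((Finset.univ.filter (fun σ : Fin n → Bool => nT σ = n / 2)).card : ℝ)
              ≤ ((2^n : ℕ) : ℝ) := by exact_mod_cast hcard
            _ = (2:ℝ)^n := by push_cast; ring
  -- Step 4 : put everything together
  have htot := erProb_union_le hp0 hp1 badA badB
  have hstep := erProb_mono hp0 hp1 hsub
  have h2n : ((n:ℝ)+1) ≤ (2:ℝ)^n := by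
    have := Nat.lt_two_pow_self (n := n)
    have h4 : (n:ℝ) + 1 ≤ ((2^n : ℕ):ℝ) := by exact_mod_cast this
    calc (n:ℝ)+1 ≤ ((2^n : ℕ):ℝ) := h4
      _ = (2:ℝ)^n := by push_cast; ring
  have hfinal : ((n:ℝ)+1) * Real.exp (-(2*(n:ℝ)))
        + (2:ℝ)^n * (Real.exp 1 * Real.exp (-(2*(n:ℝ))))
      ≤ (1 + Real.exp 1) * (2 * Real.exp (-2))^n := by
    have hpow : (2 * Real.exp (-2))^n = (2:ℝ)^n * Real.exp (-(2*(n:ℝ))) := by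
      rw [mul_pow, ← Real.exp_nat_mul]
      ring_nf
    rw [hpow]
    have he : 0 ≤ Real.exp (-(2*(n:ℝ))) := Real.exp_nonneg _
    have h1 : ((n:ℝ)+1) * Real.exp (-(2*(n:ℝ))) ≤ (2:ℝ)^n * Real.exp (-(2*(n:ℝ))) :=
      mul_le_mul_of_nonneg_right h2n he
    nlinarith [Real.exp_nonneg 1, pow_nonneg (by norm_num : (0:ℝ) ≤ 2) n]
  calc erProb n (fn / n) (Finset.univ.filter (fun ω : EdgeCand n → Bool =>
        ε < |gammaStar (hamiltonian J h (erEdges n ω)) / ((1/4) * J * n * fn) - 1|))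
      ≤ erProb n (fn/n) (badA ∪ badB) := hstep
    _ ≤ erProb n (fn/n) badA + erProb n (fn/n) badB := htot
    _ ≤ ((n:ℝ)+1) * Real.exp (-(2*(n:ℝ)))
        + (2:ℝ)^n * (Real.exp 1 * Real.exp (-(2*(n:ℝ)))) := by linarith
    _ ≤ _ := hfinal

open Classical in
/-- Fix `J > 0` and `h > 0`. Let `f : ℕ → (0,∞)` satisfy `f(n) → ∞` and
`f(n) ≤ n`, and set `p = f(n)/n`. Then the energy barrier `Γ*_n` of the
Erdős–Rényi random graph `ER_n(p)` satisfies
`Γ*_n / ((1/4)·J·n·f(n)) → 1` in probability: for every `ε > 0`,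
`P[|Γ*_n / ((1/4)·J·n·f(n)) − 1| > ε] → 0`. -/
theorem stmt17 (J h : ℝ) (hJ : 0 < J) (hh : 0 < h)
    (f : ℕ → ℝ) (hf : ∀ n, 0 < f n) (hfn : ∀ n : ℕ, 1 ≤ n → f n ≤ n)
    (hftop : Filter.Tendsto f Filter.atTop Filter.atTop) :
    ∀ ε : ℝ, 0 < ε →
      Filter.Tendsto (fun n => erProb n (f n / n)
          (Finset.univ.filter (fun ω : EdgeCand n → Bool =>
            ε < |gammaStar (hamiltonian J h (erEdges n ω))
                    / ((1/4) * J * n * f n) - 1|)))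
        Filter.atTop (nhds 0) := by
  intro ε hε
  set δ : ℝ := min (ε/2) (1/2) with hδdef
  have hδ0 : 0 < δ := lt_min (by linarith) (by norm_num)
  have hδ1 : δ < 1 := lt_of_le_of_lt (min_le_right _ _) (by norm_num)
  have hδε : δ ≤ ε := le_trans (min_le_left _ _) (by linarith)
  have hεδ : 0 < ε - δ := by
    have h1 : δ ≤ ε/2 := min_le_left _ _
    linarith
  have hc₁pos : 0 < (1+δ) * Real.log (1+δ) - δ := by
    have hb : (0:ℝ) < 1 + δ := by linarith
    have hxne : ((1+δ)⁻¹ : ℝ) ≠ 1 := by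
      intro hc
      rw [inv_eq_one] at hc
      linarith
    have hlt := Real.log_lt_sub_one_of_pos (inv_pos.2 hb) hxne
    rw [Real.log_inv] at hlt
    have hcancel : (1+δ) * (1+δ)⁻¹ = 1 := mul_inv_cancel₀ (ne_of_gt hb)
    nlinarith [mul_lt_mul_of_pos_left hlt hb]
  have hc₂pos : 0 < δ + (1-δ) * Real.log (1-δ) := by
    have hb : (0:ℝ) < 1 - δ := by linarith
    have hxne : ((1-δ)⁻¹ : ℝ) ≠ 1 := by
      intro hc
      rw [inv_eq_one] at hc
      linarith
    have hlt := Real.log_lt_sub_one_of_pos (inv_pos.2 hb) hxne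
    rw [Real.log_inv] at hlt
    have hcancel : (1-δ) * (1-δ)⁻¹ = 1 := mul_inv_cancel₀ (ne_of_gt hb)
    nlinarith [mul_lt_mul_of_pos_left hlt hb]
  have hev : ∀ᶠ n : ℕ in Filter.atTop,
      erProb n (f n / n) (Finset.univ.filter (fun ω : EdgeCand n → Bool =>
        ε < |gammaStar (hamiltonian J h (erEdges n ω)) / ((1/4) * J * n * f n) - 1|))
      ≤ (1 + Real.exp 1) * (2 * Real.exp (-2))^n := by
    have h1 := hftop.eventually_ge_atTop (8 / ((1+δ) * Real.log (1+δ) - δ))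
    have h2 := hftop.eventually_ge_atTop (8 / (δ + (1-δ) * Real.log (1-δ)))
    have h3 := hftop.eventually_ge_atTop ((2*h) / (J*(ε-δ)))
    have h4 := Filter.eventually_ge_atTop (1 : ℕ)
    filter_upwards [h1, h2, h3, h4] with n hn1 hn2 hn3 hn4
    apply main_estimate J h hJ hh hn4 (f n) ε δ (hf n) (hfn n hn4) hε hδ0 hδ1 hδε
    · rw [div_le_iff₀ hc₁pos] at hn1
      linarith
    · rw [div_le_iff₀ hc₂pos] at hn2
      linarith
    · have hJεδ : 0 < J * (ε - δ) := by positivity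
      rw [div_le_iff₀ hJεδ] at hn3
      nlinarith
  have hnn : ∀ᶠ n : ℕ in Filter.atTop,
      0 ≤ erProb n (f n / n) (Finset.univ.filter (fun ω : EdgeCand n → Bool =>
        ε < |gammaStar (hamiltonian J h (erEdges n ω)) / ((1/4) * J * n * f n) - 1|)) := by
    filter_upwards [Filter.eventually_ge_atTop (1 : ℕ)] with n hn
    have hn0 : (0:ℝ) < n := by exact_mod_cast hn
    have hp0 : 0 ≤ f n / n := div_nonneg (hf n).le (Nat.cast_nonneg n)
    have hp1 : f n / n ≤ 1 := by rw [div_le_one hn0]; exact hfn n hn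
    exact erProb_nonneg hp0 hp1 _
  have hlim : Filter.Tendsto (fun n : ℕ => (1 + Real.exp 1) * (2 * Real.exp (-2))^n)
      Filter.atTop (nhds 0) := by
    rw [show (0:ℝ) = (1 + Real.exp 1) * 0 by ring]
    apply Filter.Tendsto.const_mul
    apply tendsto_pow_atTop_nhds_zero_of_lt_one
    · positivity
    · have h3 : (3:ℝ) ≤ Real.exp 2 := by
        have := Real.add_one_le_exp (2:ℝ)
        linarith
      have hprod : Real.exp (-2) * Real.exp 2 = 1 := by
        rw [← Real.exp_add]; norm_num
      have hpos : 0 < Real.exp (-2) := Real.exp_pos _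
      nlinarith [mul_le_mul_of_nonneg_left h3 hpos.le]
  exact squeeze_zero' hnn hev hlim
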